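/- If c̄ is the lexicographically minimal multi-index of total degree l with f_{c̄} ≠ 0 among those of degree l, then for every m ≥ 1 the coefficient of f[l]^m at the multi-index m·c̄ equals (f_{c̄})^m. -/

import Mathlib

/-- The homogeneous block of total degree `j` of a multivariable power series. -/
noncomputable def block {q : ℕ} {K : Type*} [Field K] (f : MvPowerSeries (Fin q) K) (j : ℕ) :
    MvPowerSeries (Fin q) K :=
  fun c => if c.sum (fun _ n => n) = j then MvPowerSeries.coeff c f else 0

theorem coeff_block_pow_at_lex_min {q : ℕ} {K : Type*} [Field K]
    (f : MvPowerSeries (Fin q) K) (l : ℕ) (cbar : Fin q →₀ ℕ)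
    (hdeg : cbar.sum (fun _ e => e) = l)
    (hne : MvPowerSeries.coeff cbar f ≠ 0)
    (hmin : ∀ c : Fin q →₀ ℕ, c.sum (fun _ e => e) = l →
      MvPowerSeries.coeff c f ≠ 0 → ¬ (toLex c < toLex cbar))
    (m : ℕ) (hm : 1 ≤ m) :
    MvPowerSeries.coeff (m • cbar) (block f l ^ m) =
      (MvPowerSeries.coeff cbar f) ^ m := by
  have hcoeff : ∀ a : Fin q →₀ ℕ, MvPowerSeries.coeff a (block f l) =
      if a.sum (fun _ n => n) = l then MvPowerSeries.coeff a f else 0 := fun a => rfl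
  have hg : ∀ a : Fin q →₀ ℕ, MvPowerSeries.coeff a (block f l) ≠ 0 →
      toLex cbar ≤ toLex a := by
    intro a ha
    rw [hcoeff] at ha
    by_cases h : a.sum (fun _ n => n) = l
    · rw [if_pos h] at ha
      exact not_lt.mp (hmin a h ha)
    · rw [if_neg h] at ha; exact absurd rfl ha
  have hgc : MvPowerSeries.coeff cbar (block f l) = MvPowerSeries.coeff cbar f := by
    rw [hcoeff, if_pos hdeg]
  have key : ∀ n : ℕ,
      (∀ c : Fin q →₀ ℕ, toLex c < toLex (n • cbar) →
        MvPowerSeries.coeff c (block f l ^ n) = 0) ∧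
      MvPowerSeries.coeff (n • cbar) (block f l ^ n) =
        (MvPowerSeries.coeff cbar f) ^ n := by
    intro n
    induction n with
    | zero =>
      constructor
      · intro c hc
        rw [pow_zero, MvPowerSeries.coeff_one, if_neg]
        intro h; subst h; simp at hc
      · rw [zero_smul, pow_zero, MvPowerSeries.coeff_one, if_pos rfl, pow_zero]
    | succ n ih =>
      have hstep : ∀ a b : Fin q →₀ ℕ, a + b = (n + 1) • cbar →
          MvPowerSeries.coeff a (block f l) *
            MvPowerSeries.coeff b (block f l ^ n) ≠ 0 →
          a = cbar ∧ b = n • cbar := by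
        intro a b hab hne0
        have h1 : MvPowerSeries.coeff a (block f l) ≠ 0 := left_ne_zero_of_mul hne0
        have h2 : MvPowerSeries.coeff b (block f l ^ n) ≠ 0 := right_ne_zero_of_mul hne0
        have ha : toLex cbar ≤ toLex a := hg a h1
        have hb : toLex (n • cbar) ≤ toLex b := not_lt.mp (fun h => h2 (ih.1 b h))
        have heq : toLex a + toLex b = toLex cbar + toLex (n • cbar) := by
          rw [← toLex_add, ← toLex_add, hab, succ_nsmul']
        have ha' : toLex a = toLex cbar := by
          by_contra h
          have : toLex cbar < toLex a := lt_of_le_of_ne ha (Ne.symm h)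
          have : toLex cbar + toLex (n • cbar) < toLex a + toLex b :=
            add_lt_add_of_lt_of_le this hb
          rw [heq] at this; exact lt_irrefl _ this
        have haa : a = cbar := toLex.injective ha'
        refine ⟨haa, ?_⟩
        rw [haa, succ_nsmul'] at hab
        exact add_left_cancel hab
      constructor
      · intro c hc
        rw [pow_succ', MvPowerSeries.coeff_mul]
        apply Finset.sum_eq_zero
        rintro ⟨a, b⟩ hmem
        rw [Finset.HasAntidiagonal.mem_antidiagonal] at hmem
        by_contra hne0
        have h1 : MvPowerSeries.coeff a (block f l) ≠ 0 := left_ne_zero_of_mul hne0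
        have h2 : MvPowerSeries.coeff b (block f l ^ n) ≠ 0 := right_ne_zero_of_mul hne0
        have ha : toLex cbar ≤ toLex a := hg a h1
        have hb : toLex (n • cbar) ≤ toLex b := not_lt.mp (fun h => h2 (ih.1 b h))
        have : toLex ((n + 1) • cbar) ≤ toLex c := by
          rw [← hmem, succ_nsmul', toLex_add, toLex_add]
          exact add_le_add ha hb
        exact absurd hc (not_lt.mpr this)
      · rw [pow_succ', MvPowerSeries.coeff_mul]
        rw [Finset.sum_eq_single (cbar, n • cbar)]
        · rw [hgc, ih.2, pow_succ']
        · rintro ⟨a, b⟩ hmem hne'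
          rw [Finset.HasAntidiagonal.mem_antidiagonal] at hmem
          by_contra hne0
          obtain ⟨ha, hb⟩ := hstep a b hmem hne0
          exact hne' (by rw [ha, hb])
        · intro h
          exact absurd (Finset.HasAntidiagonal.mem_antidiagonal.mpr (succ_nsmul' cbar n).symm) h
  exact (key m).2
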